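/- For every x ∈ Λ, every h ∈ {0,…,N}, and every f ∈ V, one has E_{x,h}(𝓛₀ f) − 𝓛₀(E_{x,h} f) = −λ_h · E_{x,h} f. -/

import Mathlib

open scoped TensorProduct

/-- The linear map on `⨂[ℂ] x : Λ, A` applying `φ` in the `x`-th tensor factor and
the identity in all other factors. -/
noncomputable def applyAt {Λ : Type*} [DecidableEq Λ] {A : Type*}
    [AddCommMonoid A] [Module ℂ A] (x : Λ) (φ : A →ₗ[ℂ] A) :
    (⨂[ℂ] _ : Λ, A) →ₗ[ℂ] (⨂[ℂ] _ : Λ, A) :=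
  PiTensorProduct.map (Function.update (fun _ => LinearMap.id) x φ)

open Function in
lemma applyAt_comp_same {Λ : Type*} [DecidableEq Λ] {A : Type*}
    [AddCommMonoid A] [Module ℂ A] (x : Λ) (φ ψ : A →ₗ[ℂ] A) :
    applyAt x φ ∘ₗ applyAt x ψ = applyAt x (φ ∘ₗ ψ) := by
  unfold applyAt
  rw [← PiTensorProduct.map_comp]
  congr 1
  ext i g
  by_cases hi : i = x
  · subst hi; simp
  · simp [update_of_ne hi]

open Function in
lemma applyAt_comm {Λ : Type*} [DecidableEq Λ] {A : Type*}
    [AddCommMonoid A] [Module ℂ A] {x z : Λ} (hxz : x ≠ z) (φ ψ : A →ₗ[ℂ] A) :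
    applyAt x φ ∘ₗ applyAt z ψ = applyAt z ψ ∘ₗ applyAt x φ := by
  unfold applyAt
  rw [← PiTensorProduct.map_comp, ← PiTensorProduct.map_comp]
  congr 1
  ext i g
  by_cases hix : i = x
  · subst hix; simp [update_of_ne hxz]
  · by_cases hiz : i = z
    · subst hiz; simp [update_of_ne hix]
    · simp [update_of_ne hix, update_of_ne hiz]

lemma applyAt_smul {Λ : Type*} [DecidableEq Λ] {A : Type*}
    [AddCommMonoid A] [Module ℂ A] (x : Λ) (c : ℂ) (φ : A →ₗ[ℂ] A) :
    applyAt x (c • φ) = c • applyAt x φ := by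
  unfold applyAt
  ext g
  simp only [LinearMap.compMultilinearMap_apply, PiTensorProduct.map_tprod,
    LinearMap.smul_apply]
  rw [show (fun j => Function.update (fun _ : Λ => (LinearMap.id : A →ₗ[ℂ] A)) x (c • φ) j (g j))
      = Function.update (fun j => (LinearMap.id : A →ₗ[ℂ] A) (g j)) x ((c • φ) (g x)) from
      funext fun j => Function.apply_update (fun i (F : A →ₗ[ℂ] A) => F (g i)) (fun _ => LinearMap.id) x (c • φ) j,
    show (fun j => Function.update (fun _ : Λ => (LinearMap.id : A →ₗ[ℂ] A)) x φ j (g j))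
      = Function.update (fun j => (LinearMap.id : A →ₗ[ℂ] A) (g j)) x (φ (g x)) from
      funext fun j => Function.apply_update (fun i (F : A →ₗ[ℂ] A) => F (g i)) (fun _ => LinearMap.id) x φ j]
  simp

lemma applyAt_zero {Λ : Type*} [DecidableEq Λ] {A : Type*}
    [AddCommMonoid A] [Module ℂ A] (x : Λ) :
    applyAt x (0 : A →ₗ[ℂ] A) = 0 := by
  have := applyAt_smul (A := A) x (0 : ℂ) 0
  simpa using this

/-- Intertwining relation between the non-interacting qudit generator
`𝓛₀ = ∑_{x∈Λ} L₀^{(x)}` and the operators `E_{x,h} = (P_h)^{(x)}`: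
`E_{x,h} 𝓛₀ f − 𝓛₀ E_{x,h} f = −λ_h E_{x,h} f`. -/
theorem intertwining_qudit
    {A : Type*} [NormedAddCommGroup A] [InnerProductSpace ℂ A] [FiniteDimensional ℂ A]
    {N : ℕ} (e : OrthonormalBasis (Fin (N + 1)) ℂ A)
    (lam : Fin (N + 1) → ℝ) (hlam0 : lam 0 = 0)
    {Λ : Type*} [Fintype Λ] [DecidableEq Λ]
    (L0 : A →ₗ[ℂ] A)
    (hL0 : ∀ g : A, L0 g = -∑ h : Fin (N + 1), (lam h : ℂ) • ((inner ℂ (e h) g : ℂ) • e h))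
    (P : Fin (N + 1) → (A →ₗ[ℂ] A))
    (hP : ∀ (h : Fin (N + 1)) (g : A), P h g = (inner ℂ (e h) g : ℂ) • e 0)
    (x : Λ) (h : Fin (N + 1)) (f : ⨂[ℂ] _ : Λ, A) :
    applyAt x (P h) ((∑ z : Λ, applyAt z L0) f)
      - (∑ z : Λ, applyAt z L0) (applyAt x (P h) f)
      = -((lam h : ℂ) • applyAt x (P h) f) := by
  have hPL : P h ∘ₗ L0 = (-(lam h : ℂ)) • P h := by
    ext g
    simp only [LinearMap.comp_apply, LinearMap.smul_apply, hP, hL0]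
    rw [inner_neg_right, inner_sum]
    simp only [inner_smul_right]
    rw [Finset.sum_eq_single h]
    · simp [smul_smul, orthonormal_iff_ite.mp e.orthonormal h h]
    · intro k _ hk
      simp [e.orthonormal.2 (Ne.symm hk)]
    · simp
  have hLP : L0 ∘ₗ P h = 0 := by
    ext g
    simp only [LinearMap.comp_apply, LinearMap.zero_apply, hP, map_smul, hL0]
    rw [Finset.sum_eq_single 0]
    · simp [hlam0]
    · intro k _ hk
      simp [inner_smul_right, e.orthonormal.2 hk]
    · simp
  rw [LinearMap.sum_apply, map_sum, LinearMap.sum_apply, ← Finset.sum_sub_distrib]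
  rw [Finset.sum_eq_single x]
  · have h1 := LinearMap.congr_fun (applyAt_comp_same x (P h) L0) f
    have h2 := LinearMap.congr_fun (applyAt_comp_same x L0 (P h)) f
    simp only [LinearMap.comp_apply] at h1 h2
    rw [h1, h2, hPL, hLP, applyAt_zero, applyAt_smul]
    simp [neg_smul]
  · intro z _ hzx
    have hc := LinearMap.congr_fun (applyAt_comm (Ne.symm hzx) (P h) L0) f
    simp only [LinearMap.comp_apply] at hc
    rw [hc, sub_self]
  · simp
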